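/- arXiv:math/9801031 — 2 statements merged into one kernel-verified Lean document; each statement's English description precedes it below -/
import Mathlib

section
/- The explicit SL_q(N) braid matrix R̂ on ℂ^N ⊗ ℂ^N, defined by R̂ = q·Σ_i e^i_i⊗e^i_i + Σ_{i≠j} e^j_i⊗e^i_j + (q−q⁻¹)·Σ_{i<j} e^i_i⊗e^j_j (where e^i_j is the elementary matrix), satisfies the braid equation R̂₁₂ R̂₂₃ R̂₁₂ = R̂₂₃ R̂₁₂ R̂₂₃, where R̂₁₂ = R̂⊗1 and R̂₂₃ = 1⊗R̂ as operators on ℂ^N ⊗ ℂ^N ⊗ ℂ^N. -/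
/-- The explicit `SL_q(N)` braid matrix `R̂` on `ℂ^N ⊗ ℂ^N`, with row index `(i,j)`
and column index `(k,l)`: entry `q` if `i=j=k=l`, `1` if `i≠j, k=j, l=i`,
`q - q⁻¹` if `i<j, k=i, l=j`, and `0` otherwise. -/
noncomputable def Rhat (K : Type*) [Field K] (N : ℕ) (q : K) :
    Matrix (Fin N × Fin N) (Fin N × Fin N) K := fun p r =>
  (if p.1 = p.2 ∧ r.1 = p.1 ∧ r.2 = p.1 then q else 0) +
  (if p.1 ≠ p.2 ∧ r.1 = p.2 ∧ r.2 = p.1 then 1 else 0) +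
  (if p.1 < p.2 ∧ r.1 = p.1 ∧ r.2 = p.2 then q - q⁻¹ else 0)

/-- `M₁₂ = M ⊗ 1` as an operator (matrix) on `K^N ⊗ K^N ⊗ K^N`. -/
def M12 {K : Type*} [Field K] {N : ℕ}
    (M : Matrix (Fin N × Fin N) (Fin N × Fin N) K) :
    Matrix (Fin N × Fin N × Fin N) (Fin N × Fin N × Fin N) K :=
  fun p r => M (p.1, p.2.1) (r.1, r.2.1) * (if p.2.2 = r.2.2 then 1 else 0)

/-- `M₂₃ = 1 ⊗ M` as an operator (matrix) on `K^N ⊗ K^N ⊗ K^N`. -/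
def M23 {K : Type*} [Field K] {N : ℕ}
    (M : Matrix (Fin N × Fin N) (Fin N × Fin N) K) :
    Matrix (Fin N × Fin N × Fin N) (Fin N × Fin N × Fin N) K :=
  fun p r => (if p.1 = r.1 then (1 : K) else 0) * M p.2 r.2


section BraidAux

variable {K : Type*} [Field K] {N : ℕ}

lemma Rhat_tripleL (M : Matrix (Fin N × Fin N) (Fin N × Fin N) K)
    (a b c d e f : Fin N) :
    (M12 M * M23 M * M12 M) (a,b,c) (d,e,f) =
      ∑ x, ∑ y, ∑ v, M (a,b) (x,y) * (M (y,c) (v,f) * M (x,v) (d,e)) := by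
  simp only [Matrix.mul_apply, M12, M23, Fintype.sum_prod_type]
  simp [mul_ite, ite_mul, mul_zero, zero_mul, Finset.mul_sum, Finset.sum_mul,
    Finset.sum_ite_eq, Finset.sum_ite_eq']
  simp_rw [mul_assoc]
  exact Finset.sum_congr rfl fun x _ => Finset.sum_comm

lemma Rhat_tripleR (M : Matrix (Fin N × Fin N) (Fin N × Fin N) K)
    (a b c d e f : Fin N) :
    (M23 M * M12 M * M23 M) (a,b,c) (d,e,f) =
      ∑ y, ∑ z, ∑ v, M (b,c) (y,z) * (M (a,y) (d,v) * M (v,z) (e,f)) := by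
  simp only [Matrix.mul_apply, M12, M23, Fintype.sum_prod_type]
  simp [mul_ite, ite_mul, mul_zero, zero_mul, Finset.mul_sum, Finset.sum_mul,
    Finset.sum_ite_eq, Finset.sum_ite_eq']
  simp_rw [mul_assoc]
  conv_lhs => enter [2, x]; rw [Finset.sum_comm]
  rw [Finset.sum_comm]
  conv_lhs => enter [2, y]; rw [Finset.sum_comm]

lemma Rhat_collapse (q : K) (a b : Fin N) (g : Fin N → Fin N → K) :
    ∑ x, ∑ y, Rhat K N q (a,b) (x,y) * g x y =
      if a = b then q * g a a
      else (if a < b then (q - q⁻¹) * g a b else 0) + g b a := by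
  rcases eq_or_ne a b with rfl | h
  · simp [Rhat, ite_and, Finset.sum_ite_eq, Finset.sum_ite_eq']
  · simp only [Rhat, h, if_neg h]
    simp [ite_and, Finset.sum_ite_eq, Finset.sum_ite_eq', add_mul, ite_mul,
      zero_mul, Finset.sum_add_distrib, h, add_comm]

lemma Rhat_collapse1 (q : K) (a b f : Fin N) (h : Fin N → K) :
    ∑ v, Rhat K N q (a,b) (v,f) * h v =
      if a = b then (if f = a then q * h a else 0)
      else (if a < b ∧ f = b then (q - q⁻¹) * h a else 0) +
        (if f = a then h b else 0) := by
  rcases eq_or_ne a b with rfl | hab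
  · simp [Rhat, ite_and, Finset.sum_ite_eq, Finset.sum_ite_eq', and_comm]
  · simp only [Rhat, hab, if_neg hab]
    simp [ite_and, Finset.sum_ite_eq, Finset.sum_ite_eq', add_mul, ite_mul,
      zero_mul, Finset.sum_add_distrib, hab, add_comm]

lemma Rhat_collapse2 (q : K) (a b d : Fin N) (h : Fin N → K) :
    ∑ v, Rhat K N q (a,b) (d,v) * h v =
      if a = b then (if d = a then q * h a else 0)
      else (if a < b ∧ d = a then (q - q⁻¹) * h b else 0) +
        (if d = b then h a else 0) := by
  rcases eq_or_ne a b with rfl | hab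
  · simp [Rhat, ite_and, Finset.sum_ite_eq, Finset.sum_ite_eq', and_comm]
  · simp only [Rhat, hab, if_neg hab]
    simp [ite_and, Finset.sum_ite_eq, Finset.sum_ite_eq', add_mul, ite_mul,
      zero_mul, Finset.sum_add_distrib, hab, add_comm]

end BraidAux

set_option maxHeartbeats 2000000 in
/-- The explicit `SL_q(N)` braid matrix satisfies the braid equation
`R̂₁₂ R̂₂₃ R̂₁₂ = R̂₂₃ R̂₁₂ R̂₂₃`. -/
theorem Rhat_braid (K : Type*) [Field K] (N : ℕ) (hN : 1 ≤ N) (q : K) (hq : q ≠ 0) :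
    M12 (Rhat K N q) * M23 (Rhat K N q) * M12 (Rhat K N q) =
      M23 (Rhat K N q) * M12 (Rhat K N q) * M23 (Rhat K N q) := by
  ext ⟨a, b, c⟩ ⟨d, e, f⟩
  rw [Rhat_tripleL, Rhat_tripleR]
  simp_rw [← Finset.mul_sum, Rhat_collapse, Rhat_collapse1, Rhat_collapse2]
  simp only [Rhat, ne_eq, ite_and]
  rcases lt_trichotomy a b with hab | hab | hab <;>
    rcases lt_trichotomy b c with hbc | hbc | hbc <;>
      rcases lt_trichotomy a c with hac | hac | hac <;>
        first
          | omega
          | (simp (disch := omega) only [if_pos, if_neg]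
             split_ifs <;>
               first
                 | omega
                 | exact absurd trivial (by assumption)
                 | ring1
                 | (field_simp; ring1))
end

section
/- Let R̂ be the explicit SL_q(2) braid matrix with q generic (q ∈ ℂ, q ≠ 0, q⁴ ≠ 1). If a 4×4 matrix W satisfies R̂₁₂·W₂₃·R̂₁₂ = R̂₂₃·W₁₂·R̂₂₃, then W is a scalar multiple of R̂. -/
set_option maxHeartbeats 1000000 in
/-- For the explicit `SL_q(2)` braid matrix with generic `q` (`q ≠ 0`, `q⁴ ≠ 1`),
any `4×4` matrix `W` satisfying `R̂₁₂·W₂₃·R̂₁₂ = R̂₂₃·W₁₂·R̂₂₃` is a scalar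
multiple of `R̂`. -/
theorem consistency_unique_sl2 (q : ℂ) (hq : q ≠ 0) (hq4 : q ^ 4 ≠ 1)
    (W : Matrix (Fin 2 × Fin 2) (Fin 2 × Fin 2) ℂ)
    (hW : M12 (Rhat ℂ 2 q) * M23 W * M12 (Rhat ℂ 2 q) =
      M23 (Rhat ℂ 2 q) * M12 W * M23 (Rhat ℂ 2 q)) :
    ∃ c : ℂ, W = c • Rhat ℂ 2 q := by
  have hu : q * q⁻¹ = 1 := mul_inv_cancel₀ hq
  have hm1 : q - 1 ≠ 0 := fun h => hq4 (by linear_combination (q^3+q^2+q+1)*h)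
  have hp1 : q + 1 ≠ 0 := fun h => hq4 (by linear_combination (q^3-q^2+q-1)*h)
  have hs1 : q^2+1 ≠ 0 := fun h => hq4 (by linear_combination (q^2-1)*h)
  have h0 := congr_fun (congr_fun hW ((0:Fin 2),(0:Fin 2),(0:Fin 2))) ((0:Fin 2),(0:Fin 2),(1:Fin 2))
  have h1 := congr_fun (congr_fun hW ((0:Fin 2),(0:Fin 2),(0:Fin 2))) ((0:Fin 2),(1:Fin 2),(0:Fin 2))
  have h2 := congr_fun (congr_fun hW ((0:Fin 2),(0:Fin 2),(0:Fin 2))) ((0:Fin 2),(1:Fin 2),(1:Fin 2))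
  have h4 := congr_fun (congr_fun hW ((0:Fin 2),(0:Fin 2),(1:Fin 2))) ((0:Fin 2),(0:Fin 2),(0:Fin 2))
  have h5 := congr_fun (congr_fun hW ((0:Fin 2),(0:Fin 2),(1:Fin 2))) ((0:Fin 2),(0:Fin 2),(1:Fin 2))
  have h6 := congr_fun (congr_fun hW ((0:Fin 2),(0:Fin 2),(1:Fin 2))) ((0:Fin 2),(1:Fin 2),(0:Fin 2))
  have h7 := congr_fun (congr_fun hW ((0:Fin 2),(0:Fin 2),(1:Fin 2))) ((0:Fin 2),(1:Fin 2),(1:Fin 2))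
  have h11 := congr_fun (congr_fun hW ((0:Fin 2),(1:Fin 2),(0:Fin 2))) ((0:Fin 2),(0:Fin 2),(0:Fin 2))
  have h12 := congr_fun (congr_fun hW ((0:Fin 2),(1:Fin 2),(0:Fin 2))) ((0:Fin 2),(0:Fin 2),(1:Fin 2))
  have h13 := congr_fun (congr_fun hW ((0:Fin 2),(1:Fin 2),(0:Fin 2))) ((0:Fin 2),(1:Fin 2),(0:Fin 2))
  have h14 := congr_fun (congr_fun hW ((0:Fin 2),(1:Fin 2),(0:Fin 2))) ((0:Fin 2),(1:Fin 2),(1:Fin 2))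
  have h18 := congr_fun (congr_fun hW ((0:Fin 2),(1:Fin 2),(1:Fin 2))) ((0:Fin 2),(0:Fin 2),(0:Fin 2))
  have h19 := congr_fun (congr_fun hW ((0:Fin 2),(1:Fin 2),(1:Fin 2))) ((0:Fin 2),(0:Fin 2),(1:Fin 2))
  have h20 := congr_fun (congr_fun hW ((0:Fin 2),(1:Fin 2),(1:Fin 2))) ((0:Fin 2),(1:Fin 2),(0:Fin 2))
  have h21 := congr_fun (congr_fun hW ((0:Fin 2),(1:Fin 2),(1:Fin 2))) ((0:Fin 2),(1:Fin 2),(1:Fin 2))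
  simp (config := { decide := true }) only [Matrix.mul_apply, M12, M23, Rhat, Fintype.sum_prod_type, Fin.sum_univ_two, if_true, if_false, mul_one, mul_zero, zero_mul, one_mul, add_zero, zero_add] at h0 h1 h2 h4 h5 h6 h7 h11 h12 h13 h14 h18 h19 h20 h21
  have key1 : (q^2+-1*q) * W ((0:Fin 2),(0:Fin 2)) ((0:Fin 2),(1:Fin 2)) = 0 := by
    linear_combination (1) * h0
  have e1 : W ((0:Fin 2),(0:Fin 2)) ((0:Fin 2),(1:Fin 2)) = 0 := mul_left_cancel₀ (mul_ne_zero hq hm1) (by linear_combination key1)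
  have key2 : (q^2+-1) * W ((0:Fin 2),(0:Fin 2)) ((1:Fin 2),(0:Fin 2)) = 0 := by
    linear_combination (1) * h1 + (1) * W ((0:Fin 2),(0:Fin 2)) ((1:Fin 2),(0:Fin 2)) * hu
  have e2 : W ((0:Fin 2),(0:Fin 2)) ((1:Fin 2),(0:Fin 2)) = 0 := mul_left_cancel₀ (mul_ne_zero hm1 hp1) (by linear_combination key2)
  have key3 : (q^2+-1) * W ((0:Fin 2),(0:Fin 2)) ((1:Fin 2),(1:Fin 2)) = 0 := by
    linear_combination (1) * h2 + (1) * W ((0:Fin 2),(0:Fin 2)) ((1:Fin 2),(1:Fin 2)) * hu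
  have e3 : W ((0:Fin 2),(0:Fin 2)) ((1:Fin 2),(1:Fin 2)) = 0 := mul_left_cancel₀ (mul_ne_zero hm1 hp1) (by linear_combination key3)
  have key4 : (q^2+-1*q) * W ((0:Fin 2),(1:Fin 2)) ((0:Fin 2),(0:Fin 2)) = 0 := by
    linear_combination (1) * h4
  have e4 : W ((0:Fin 2),(1:Fin 2)) ((0:Fin 2),(0:Fin 2)) = 0 := mul_left_cancel₀ (mul_ne_zero hq hm1) (by linear_combination key4)
  have key5 : (q^4+-1*q^2) * W ((0:Fin 2),(1:Fin 2)) ((0:Fin 2),(1:Fin 2)) = (q^4+-2*q^2+1) * W ((0:Fin 2),(0:Fin 2)) ((0:Fin 2),(0:Fin 2)) := by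
    linear_combination (q^2) * h5 + (-2*q^2+q*q⁻¹+1) * W ((0:Fin 2),(0:Fin 2)) ((0:Fin 2),(0:Fin 2)) * hu
  have e5 : W ((0:Fin 2),(1:Fin 2)) ((0:Fin 2),(1:Fin 2)) = q⁻¹ * W ((0:Fin 2),(0:Fin 2)) ((0:Fin 2),(0:Fin 2)) * (q+-1*q⁻¹) := mul_left_cancel₀ (mul_ne_zero (mul_ne_zero (mul_ne_zero hq hq) hm1) hp1) (by linear_combination key5 + (-1*q^4+q^3*q⁻¹+2*q^2+-1*q*q⁻¹+-1) * W ((0:Fin 2),(0:Fin 2)) ((0:Fin 2),(0:Fin 2)) * hu)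
  have key6 : (q^3+-1*q) * W ((0:Fin 2),(1:Fin 2)) ((1:Fin 2),(0:Fin 2)) = (q^2+-1) * W ((0:Fin 2),(0:Fin 2)) ((0:Fin 2),(0:Fin 2)) := by
    linear_combination (q) * h6 + (-1) * W ((0:Fin 2),(0:Fin 2)) ((0:Fin 2),(0:Fin 2)) * hu + (q) * W ((0:Fin 2),(1:Fin 2)) ((1:Fin 2),(0:Fin 2)) * hu
  have e6 : W ((0:Fin 2),(1:Fin 2)) ((1:Fin 2),(0:Fin 2)) = q⁻¹ * W ((0:Fin 2),(0:Fin 2)) ((0:Fin 2),(0:Fin 2)) * (1) := mul_left_cancel₀ (mul_ne_zero (mul_ne_zero hq hm1) hp1) (by linear_combination key6 + (-1*q^2+1) * W ((0:Fin 2),(0:Fin 2)) ((0:Fin 2),(0:Fin 2)) * hu)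
  have key7 : (q^3+-1*q) * W ((0:Fin 2),(1:Fin 2)) ((1:Fin 2),(1:Fin 2)) = 0 := by
    linear_combination (q+1) * h0 + (q) * h7 + (-1*q) * W ((0:Fin 2),(0:Fin 2)) ((0:Fin 2),(1:Fin 2)) * hu + (q) * W ((0:Fin 2),(1:Fin 2)) ((1:Fin 2),(1:Fin 2)) * hu
  have e7 : W ((0:Fin 2),(1:Fin 2)) ((1:Fin 2),(1:Fin 2)) = 0 := mul_left_cancel₀ (mul_ne_zero (mul_ne_zero hq hm1) hp1) (by linear_combination key7)
  have key8 : (q^2+-1) * W ((1:Fin 2),(0:Fin 2)) ((0:Fin 2),(0:Fin 2)) = 0 := by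
    linear_combination (1) * h11 + (1) * W ((1:Fin 2),(0:Fin 2)) ((0:Fin 2),(0:Fin 2)) * hu
  have e8 : W ((1:Fin 2),(0:Fin 2)) ((0:Fin 2),(0:Fin 2)) = 0 := mul_left_cancel₀ (mul_ne_zero hm1 hp1) (by linear_combination key8)
  have key9 : (q^3+-1*q) * W ((1:Fin 2),(0:Fin 2)) ((0:Fin 2),(1:Fin 2)) = (q^2+-1) * W ((0:Fin 2),(0:Fin 2)) ((0:Fin 2),(0:Fin 2)) := by
    linear_combination (q) * h12 + (-1) * W ((0:Fin 2),(0:Fin 2)) ((0:Fin 2),(0:Fin 2)) * hu + (q) * W ((1:Fin 2),(0:Fin 2)) ((0:Fin 2),(1:Fin 2)) * hu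
  have e9 : W ((1:Fin 2),(0:Fin 2)) ((0:Fin 2),(1:Fin 2)) = q⁻¹ * W ((0:Fin 2),(0:Fin 2)) ((0:Fin 2),(0:Fin 2)) * (1) := mul_left_cancel₀ (mul_ne_zero (mul_ne_zero hq hm1) hp1) (by linear_combination key9 + (-1*q^2+1) * W ((0:Fin 2),(0:Fin 2)) ((0:Fin 2),(0:Fin 2)) * hu)
  have key10 : (q^4+-2*q^2+1) * W ((1:Fin 2),(0:Fin 2)) ((1:Fin 2),(0:Fin 2)) = 0 := by
    linear_combination (q^2) * h13 + (2*q^2+-1*q*q⁻¹+-1) * W ((1:Fin 2),(0:Fin 2)) ((1:Fin 2),(0:Fin 2)) * hu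
  have e10 : W ((1:Fin 2),(0:Fin 2)) ((1:Fin 2),(0:Fin 2)) = 0 := mul_left_cancel₀ (mul_ne_zero (mul_ne_zero (mul_ne_zero hm1 hm1) hp1) hp1) (by linear_combination key10)
  have key11 : (q^4+-2*q^2+1) * W ((1:Fin 2),(0:Fin 2)) ((1:Fin 2),(1:Fin 2)) = 0 := by
    linear_combination (q) * h0 + (q^2) * h14 + (2*q^2+-1*q*q⁻¹+-1) * W ((1:Fin 2),(0:Fin 2)) ((1:Fin 2),(1:Fin 2)) * hu
  have e11 : W ((1:Fin 2),(0:Fin 2)) ((1:Fin 2),(1:Fin 2)) = 0 := mul_left_cancel₀ (mul_ne_zero (mul_ne_zero (mul_ne_zero hm1 hm1) hp1) hp1) (by linear_combination key11)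
  have key12 : (q^2+-1) * W ((1:Fin 2),(1:Fin 2)) ((0:Fin 2),(0:Fin 2)) = 0 := by
    linear_combination (1) * h18 + (1) * W ((1:Fin 2),(1:Fin 2)) ((0:Fin 2),(0:Fin 2)) * hu
  have e12 : W ((1:Fin 2),(1:Fin 2)) ((0:Fin 2),(0:Fin 2)) = 0 := mul_left_cancel₀ (mul_ne_zero hm1 hp1) (by linear_combination key12)
  have key13 : (q^3+-1*q) * W ((1:Fin 2),(1:Fin 2)) ((0:Fin 2),(1:Fin 2)) = 0 := by
    linear_combination (q+1) * h4 + (q) * h19 + (-1*q) * W ((0:Fin 2),(1:Fin 2)) ((0:Fin 2),(0:Fin 2)) * hu + (q) * W ((1:Fin 2),(1:Fin 2)) ((0:Fin 2),(1:Fin 2)) * hu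
  have e13 : W ((1:Fin 2),(1:Fin 2)) ((0:Fin 2),(1:Fin 2)) = 0 := mul_left_cancel₀ (mul_ne_zero (mul_ne_zero hq hm1) hp1) (by linear_combination key13)
  have key14 : (q^4+-2*q^2+1) * W ((1:Fin 2),(1:Fin 2)) ((1:Fin 2),(0:Fin 2)) = 0 := by
    linear_combination (q) * h4 + (q^2) * h20 + (2*q^2+-1*q*q⁻¹+-1) * W ((1:Fin 2),(1:Fin 2)) ((1:Fin 2),(0:Fin 2)) * hu
  have e14 : W ((1:Fin 2),(1:Fin 2)) ((1:Fin 2),(0:Fin 2)) = 0 := mul_left_cancel₀ (mul_ne_zero (mul_ne_zero (mul_ne_zero hm1 hm1) hp1) hp1) (by linear_combination key14)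
  have key15 : (q^4+-2*q^2+1) * W ((1:Fin 2),(1:Fin 2)) ((1:Fin 2),(1:Fin 2)) = (q^4+-2*q^2+1) * W ((0:Fin 2),(0:Fin 2)) ((0:Fin 2),(0:Fin 2)) := by
    linear_combination (q^2) * h5 + (q^2) * h21 + (-2*q^2+q*q⁻¹+1) * W ((0:Fin 2),(0:Fin 2)) ((0:Fin 2),(0:Fin 2)) * hu + (2*q^2+-1*q*q⁻¹+-1) * W ((1:Fin 2),(1:Fin 2)) ((1:Fin 2),(1:Fin 2)) * hu
  have e15 : W ((1:Fin 2),(1:Fin 2)) ((1:Fin 2),(1:Fin 2)) = q⁻¹ * W ((0:Fin 2),(0:Fin 2)) ((0:Fin 2),(0:Fin 2)) * (q) := mul_left_cancel₀ (mul_ne_zero (mul_ne_zero (mul_ne_zero hm1 hm1) hp1) hp1) (by linear_combination key15 + (-1*q^4+2*q^2+-1) * W ((0:Fin 2),(0:Fin 2)) ((0:Fin 2),(0:Fin 2)) * hu)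
  refine ⟨q⁻¹ * W ((0:Fin 2),(0:Fin 2)) ((0:Fin 2),(0:Fin 2)), ?_⟩
  ext ⟨i,j⟩ ⟨k,l⟩
  fin_cases i <;> fin_cases j <;> fin_cases k <;> fin_cases l <;>
    simp (config := { decide := true }) only [Matrix.smul_apply, smul_eq_mul, Rhat,
      Fin.mk_zero, Fin.mk_one, if_true, if_false, mul_one, mul_zero, add_zero, zero_add]
  all_goals first
    | linear_combination (-(W ((0:Fin 2),(0:Fin 2)) ((0:Fin 2),(0:Fin 2)))) * hu
    | linear_combination e1
    | linear_combination e2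
    | linear_combination e3
    | linear_combination e4
    | linear_combination e5
    | linear_combination e6
    | linear_combination e7
    | linear_combination e8
    | linear_combination e9
    | linear_combination e10
    | linear_combination e11
    | linear_combination e12
    | linear_combination e13
    | linear_combination e14
    | linear_combination e15
    | linear_combination e5 + (q⁻¹ * W ((0:Fin 2),(0:Fin 2)) ((0:Fin 2),(0:Fin 2))) * hu
    | linear_combination e15 + (W ((0:Fin 2),(0:Fin 2)) ((0:Fin 2),(0:Fin 2))) * hu
end
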